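/- Let x be a Lyndon word and let u, v be proper non-empty prefixes of x with u^∞ < v^∞. Then for any e ≥ 1, (x^e u)^∞ < (x^e v)^∞. -/

import Mathlib

set_option linter.unusedSectionVars false


variable {α : Type*} [LinearOrder α] [Inhabited α]

/-- A Lyndon word: a non-empty word strictly lexicographically smaller than
all its proper non-empty suffixes. -/
def IsLyndon (w : List α) : Prop :=
  w ≠ [] ∧ ∀ v : List α, v ≠ [] → v ≠ w → v <:+ w → List.Lex (· < ·) w v

/-- `wpow x k` is the word `x` repeated `k` times. -/
def wpow (x : List α) (k : ℕ) : List α := (List.replicate k x).flatten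

/-- `infWord x` is the infinite word `x^∞` (junk value if `x = []`). -/
def infWord (x : List α) : ℕ → α := fun i => x.getD (i % x.length) default

/-- Strict lexicographic order on infinite words. -/
def InfLt (f g : ℕ → α) : Prop := ∃ n, (∀ i < n, f i = g i) ∧ f n < g n

/-- The infinite ordering `≺` on non-empty words. -/
def Prec (u v : List α) : Prop :=
  InfLt (infWord u) (infWord v) ∨ (infWord u = infWord v ∧ v.length < u.length)

/-- `u` is strongly less than `v`: they share a common prefix followed by
strictly comparable letters. -/
def StrongLt (u v : List α) : Prop :=
  ∃ (p s t : List α) (a b : α), a < b ∧ u = p ++ a :: s ∧ v = p ++ b :: t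

/-! ### Auxiliary lemmas -/

lemma getD_drop' (x : List α) (b i : ℕ) (d : α) :
    (x.drop b).getD i d = x.getD (b + i) d := by
  simp [List.getD_eq_getElem?_getD, List.getElem?_drop]

lemma infWord_period (u : List α) (i : ℕ) :
    infWord u (i + u.length) = infWord u i := by
  unfold infWord; rw [Nat.add_mod_right]

lemma infWord_lt (u : List α) (i : ℕ) (h : i < u.length) :
    infWord u i = u.getD i default := by
  unfold infWord; rw [Nat.mod_eq_of_lt h]

lemma infWord_prefix (u x : List α) (h : u <+: x) (i : ℕ) (hi : i < u.length) :
    infWord u i = infWord x i := by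
  obtain ⟨t, rfl⟩ := h
  rw [infWord_lt _ _ hi, infWord_lt _ _ (by simp; omega),
    List.getD_append _ _ _ _ hi]

lemma period_mul {f : ℕ → α} {p : ℕ} (hf : ∀ i, f (i + p) = f i) :
    ∀ t i, f (i + p * t) = f i := by
  intro t
  induction t with
  | zero => simp
  | succ t ih =>
    intro i
    have : i + p * (t + 1) = (i + p * t) + p := by ring
    rw [this, hf, ih]

lemma period_mod {f : ℕ → α} {p : ℕ} (hp : 0 < p) (hf : ∀ i, f (i + p) = f i) (i : ℕ) :
    f i = f (i % p) := by
  have h := period_mul hf (i / p) (i % p)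
  rw [show i % p + p * (i / p) = i from Nat.mod_add_div i p] at h
  exact h

/-- Two words that agree below `r` (in range) and are strictly comparable at `r`
are lexicographically comparable. -/
lemma lex_of_getD (d : α) : ∀ (r : ℕ) (s t : List α), r < s.length → r < t.length →
    (∀ i, i < r → s.getD i d = t.getD i d) → s.getD r d < t.getD r d →
    List.Lex (· < ·) s t := by
  intro r
  induction r with
  | zero =>
    intro s t hs ht _ hlt
    cases s with
    | nil => simp at hs
    | cons a s =>
      cases t with
      | nil => simp at ht
      | cons b t =>
        simp only [List.getD_cons_zero] at hlt
        exact List.Lex.rel hlt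
  | succ r ih =>
    intro s t hs ht hagr hlt
    cases s with
    | nil => simp at hs
    | cons a s =>
      cases t with
      | nil => simp at ht
      | cons b t =>
        have h0 : a = b := by simpa using hagr 0 (Nat.succ_pos r)
        subst h0
        refine List.Lex.cons (ih s t ?_ ?_ ?_ ?_)
        · simp only [List.length_cons] at hs; omega
        · simp only [List.length_cons] at ht; omega
        · intro i hi; simpa using hagr (i + 1) (by omega)
        · simpa using hlt

/-- A proper prefix is lexicographically smaller. -/
lemma lex_append (l : List α) : ∀ t : List α, t ≠ [] → List.Lex (· < ·) l (l ++ t) := by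
  induction l with
  | nil =>
    intro t ht
    cases t with
    | nil => simp at ht
    | cons a t => exact List.Lex.nil
  | cons a l ih =>
    intro t ht
    exact List.Lex.cons (ih t ht)

/-- Key fact about Lyndon words: for a proper non-empty prefix `u` of `x`,
`u^∞` first differs from `x^∞` at some position `n` with `|u| ≤ n < |x|`,
and there `u^∞` is strictly smaller. -/
lemma factF (x u : List α) (hx : IsLyndon x) (hune : u ≠ []) (hu' : u ≠ x)
    (hupx : u <+: x) :
    ∃ n, u.length ≤ n ∧ n < x.length ∧ (∀ i, i < n → infWord u i = infWord x i) ∧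
      infWord u n < infWord x n := by
  classical
  have hpu : 0 < u.length := List.length_pos_iff.mpr hune
  have hpup : u.length < x.length :=
    lt_of_le_of_ne hupx.length_le (fun h => hu' (hupx.eq_of_length h))
  -- there is a difference below |x|
  have hdiff : ∃ i, i < x.length ∧ infWord u i ≠ infWord x i := by
    by_contra hcon
    push_neg at hcon
    have hper : ∀ i, u.length ≤ i → i < x.length →
        x.getD i default = x.getD (i - u.length) default := by
      intro i h1 h2
      have e1 : x.getD i default = infWord x i := by
        simp only [infWord]; rw [Nat.mod_eq_of_lt h2]
      have e2 : x.getD (i - u.length) default = infWord x (i - u.length) := by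
        simp only [infWord]; rw [Nat.mod_eq_of_lt (by omega)]
      have h5 : infWord u ((i - u.length) + u.length) = infWord u (i - u.length) :=
        infWord_period u _
      rw [show (i - u.length) + u.length = i by omega] at h5
      rw [e1, e2, ← hcon i h2, ← hcon (i - u.length) (by omega), h5]
    set s := x.drop u.length with hs
    have hslen : s.length = x.length - u.length := List.length_drop
    have hsne : s ≠ [] := by
      intro h
      have := congrArg List.length h
      rw [hslen] at this
      simp at this
      omega
    have hsnex : s ≠ x := by
      intro h
      have := congrArg List.length h
      rw [hslen] at this
      omega
    have hlyn := hx.2 s hsne hsnex (List.drop_suffix _ _)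
    have hstake : s = x.take (x.length - u.length) := by
      apply List.ext_getElem
      · rw [hslen, List.length_take]; omega
      · intro i h1 h2
        rw [hslen] at h1
        have hgd : s[i] = x.getD (u.length + i) default := by
          rw [List.getD_eq_getElem _ _ (by omega)]
          simp only [hs]
          exact List.getElem_drop
        have hgd2 : (x.take (x.length - u.length))[i] = x.getD i default := by
          rw [List.getD_eq_getElem _ _ (by omega : i < x.length)]
          exact List.getElem_take
        rw [hgd, hgd2]
        have := hper (u.length + i) (by omega) (by omega)
        simpa using this
    have hlex : List.Lex (· < ·) s x := by
      have hx2 : s ++ x.drop (x.length - u.length) = x := by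
        rw [hstake, List.take_append_drop]
      rw [← hx2]
      apply lex_append
      intro hnil
      have := congrArg List.length hnil
      simp only [List.length_drop, List.length_nil] at this
      omega
    exact absurd hlyn (asymm hlex)
  obtain ⟨i0, hi0, hi0d⟩ := hdiff
  have hP : ∃ i, infWord u i ≠ infWord x i := ⟨i0, hi0d⟩
  set n := Nat.find hP with hn
  have hdn : infWord u n ≠ infWord x n := Nat.find_spec hP
  have hagr : ∀ i, i < n → infWord u i = infWord x i := by
    intro i hi
    have := Nat.find_min hP hi
    simpa using this
  have hnle : n ≤ i0 := Nat.find_min' hP hi0d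
  have hnp : n < x.length := lt_of_le_of_lt hnle hi0
  have hpun : u.length ≤ n := by
    by_contra h
    push_neg at h
    exact hdn (infWord_prefix u x hupx n h)
  refine ⟨n, hpun, hnp, hagr, ?_⟩
  rcases lt_or_gt_of_ne hdn with h | h
  · exact h
  exfalso
  set r := n % u.length with hr
  have hrlt : r < u.length := Nat.mod_lt _ hpu
  set b := n - r with hb
  have hbr : b + r = n := by omega
  have hbpos : 0 < b := by omega
  have hbdvd : u.length ∣ b := by
    refine ⟨n / u.length, ?_⟩
    have := Nat.div_add_mod n u.length
    omega
  set s := x.drop b with hs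
  have hslen : s.length = x.length - b := List.length_drop
  have hsne : s ≠ [] := by
    intro hnil
    have := congrArg List.length hnil
    rw [hslen] at this
    simp at this
    omega
  have hsnex : s ≠ x := by
    intro heq
    have := congrArg List.length heq
    rw [hslen] at this
    omega
  have hlyn := hx.2 s hsne hsnex (List.drop_suffix _ _)
  refine absurd hlyn (asymm ?_)
  have hprefgetD : ∀ j, j < u.length → u.getD j default = x.getD j default := by
    intro j hj
    obtain ⟨t, rfl⟩ := hupx
    rw [List.getD_append _ _ _ _ hj]
  apply lex_of_getD default r
  · rw [hslen]; omega
  · omega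
  · intro i hi
    have hgd : s.getD i default = x.getD (b + i) default := by
      rw [hs, getD_drop']
    rw [hgd]
    have h1 : x.getD (b + i) default = infWord x (b + i) := by
      simp only [infWord]; rw [Nat.mod_eq_of_lt (by omega)]
    have h2 : infWord x (b + i) = infWord u (b + i) := (hagr _ (by omega)).symm
    have h3 : infWord u (b + i) = u.getD i default := by
      simp only [infWord]
      congr 1
      obtain ⟨k, hk⟩ := hbdvd
      rw [hk, Nat.add_comm, Nat.add_mul_mod_self_left, Nat.mod_eq_of_lt (by omega)]
    rw [h1, h2, h3, hprefgetD i (by omega)]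
  · have hgd : s.getD r default = x.getD (b + r) default := by
      rw [hs, getD_drop']
    rw [hgd, hbr]
    have h1 : x.getD n default = infWord x n := by
      simp only [infWord]; rw [Nat.mod_eq_of_lt hnp]
    have h2 : infWord u n = u.getD r default := by
      rw [hr]; rfl
    have h3 : u.getD r default = x.getD r default := hprefgetD r hrlt
    rw [h1, ← h3, ← h2]
    exact h

/-- Agreement-propagation for periodic infinite words (easy Fine–Wilf). -/
lemma agree_all {f g : ℕ → α} {pu pv m : ℕ} (hpu : 0 < pu) (hplt : pu < pv)
    (hm : pv ≤ m)
    (hf : ∀ i, f (i + pu) = f i) (hg : ∀ i, g (i + pv) = g i)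
    (hagree : ∀ i, i < pu + m → f i = g i) : ∀ i, f i = g i := by
  have step3 : ∀ j, j + pv < pu + m → f j = f (j + (pv - pu)) := by
    intro j hj
    have h1 : f j = g j := hagree j (by omega)
    have h2 : g (j + pv) = g j := hg j
    have h3 : f (j + pv) = g (j + pv) := hagree _ hj
    have h4 : f (j + (pv - pu) + pu) = f (j + (pv - pu)) := hf _
    have he : j + (pv - pu) + pu = j + pv := by omega
    rw [he] at h4
    rw [h1, ← h2, ← h3, h4]
  have step4 : ∀ j, f j = f (j + (pv - pu)) := by
    intro j
    have hmod1 : f j = f (j % pu) := period_mod hpu hf j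
    have hmod2 : f (j + (pv - pu)) = f (j % pu + (pv - pu)) := by
      rw [period_mod hpu hf (j + (pv - pu)), period_mod hpu hf (j % pu + (pv - pu))]
      congr 1
      conv_lhs => rw [Nat.add_mod]
      conv_rhs => rw [Nat.add_mod]
      rw [Nat.mod_mod_of_dvd _ dvd_rfl]
    have hwin : f (j % pu) = f (j % pu + (pv - pu)) := by
      apply step3
      have : j % pu < pu := Nat.mod_lt _ hpu
      omega
    rw [hmod1, hwin, ← hmod2]
  intro i
  induction i using Nat.strong_induction_on with
  | _ i ih =>
    by_cases hcase : i < pu + m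
    · exact hagree i hcase
    · push_neg at hcase
      have hiv : pv ≤ i := by omega
      have h1 : g i = g (i - pv) := by
        have h := hg (i - pv)
        rwa [show i - pv + pv = i by omega] at h
      have h2 : f i = f (i - pu) := by
        have h := hf (i - pu)
        rwa [show i - pu + pu = i by omega] at h
      have h3 : f (i - pv) = g (i - pv) := ih (i - pv) (by omega)
      have h4 : f (i - pv) = f (i - pu) := by
        have := step4 (i - pv)
        rwa [show i - pv + (pv - pu) = i - pu by omega] at this
      rw [h1, h2, ← h3, h4]

/-- Bounds on the first difference of `u^∞` and `v^∞`. -/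
lemma key_bounds (x u v : List α)
    (hune : u ≠ []) (hupx : u <+: x) (hvne : v ≠ []) (hvpx : v <+: x)
    (nu nv n : ℕ)
    (hnu1 : u.length ≤ nu) (hnu2 : nu < x.length)
    (hnu3 : ∀ i, i < nu → infWord u i = infWord x i)
    (hnu4 : infWord u nu < infWord x nu)
    (hnv1 : v.length ≤ nv) (hnv2 : nv < x.length)
    (hnv3 : ∀ i, i < nv → infWord v i = infWord x i)
    (hnv4 : infWord v nv < infWord x nv)
    (hna : ∀ i, i < n → infWord u i = infWord v i)
    (hnl : infWord u n < infWord v n) :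
    n < u.length + nu ∧ n < v.length + nv := by
  have hpu : 0 < u.length := List.length_pos_iff.mpr hune
  have hpv : 0 < v.length := List.length_pos_iff.mpr hvne
  rcases lt_trichotomy nu nv with hc | hc | hc
  · -- n = nu
    have hdm : infWord u nu < infWord v nu := by
      rw [hnv3 nu hc]; exact hnu4
    rcases lt_trichotomy n nu with h | h | h
    · exfalso
      have heq : infWord u n = infWord v n := by
        rw [hnu3 n h, hnv3 n (by omega)]
      rw [heq] at hnl
      exact absurd hnl (lt_irrefl _)
    · omega
    · exfalso
      have := hna nu h
      rw [this] at hdm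
      exact absurd hdm (lt_irrefl _)
  · -- nu = nv =: m
    subst hc
    by_cases hnm : n ≤ nu
    · omega
    push_neg at hnm
    -- here n > m; rule out equality of lengths
    have hpne : u.length ≠ v.length := by
      intro he
      have : u = v := by
        have h1 := List.prefix_iff_eq_take.mp hupx
        have h2 := List.prefix_iff_eq_take.mp hvpx
        rw [h1, h2, he]
      rw [this] at hnl
      exact absurd hnl (lt_irrefl _)
    have hmu : u.length ≤ nu := hnu1
    have hmv : v.length ≤ nu := hnv1
    -- show n < min |u| |v| + m
    have hmain : n < min u.length v.length + nu := by
      by_contra hbad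
      push_neg at hbad
      rcases lt_or_gt_of_ne hpne with ho | ho
      · have : ∀ i, infWord u i = infWord v i := by
          apply agree_all hpu ho hmv (infWord_period u) (infWord_period v)
          intro i hi
          apply hna
          have : min u.length v.length = u.length := by omega
          omega
        rw [this n] at hnl
        exact absurd hnl (lt_irrefl _)
      · have : ∀ i, infWord v i = infWord u i := by
          apply agree_all hpv ho hmu (infWord_period v) (infWord_period u)
          intro i hi
          refine (hna i ?_).symm
          have : min u.length v.length = v.length := by omega
          omega
        rw [← this n] at hnl
        exact absurd hnl (lt_irrefl _)
    constructor <;> omega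
  · -- nv < nu: contradiction with hnl
    exfalso
    have hdm : infWord v nv < infWord u nv := by
      rw [hnu3 nv hc]; exact hnv4
    rcases lt_trichotomy n nv with h | h | h
    · have heq : infWord u n = infWord v n := by
        rw [hnu3 n (by omega), hnv3 n h]
      rw [heq] at hnl
      exact absurd hnl (lt_irrefl _)
    · rw [← h] at hdm
      exact absurd (hnl.trans hdm) (lt_irrefl _)
    · have := hna nv h
      rw [this] at hdm
      exact absurd hdm (lt_irrefl _)

lemma wpow_succ (x : List α) (e : ℕ) : wpow x (e + 1) = x ++ wpow x e := by
  unfold wpow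
  rw [List.replicate_succ, List.flatten_cons]

lemma wpow_length (x : List α) (e : ℕ) : (wpow x e).length = e * x.length := by
  induction e with
  | zero => simp [wpow]
  | succ e ih =>
    rw [wpow_succ, List.length_append, ih]
    ring

lemma wpow_getD (x : List α) (e i : ℕ) (h : i < e * x.length) :
    (wpow x e).getD i default = x.getD (i % x.length) default := by
  induction e generalizing i with
  | zero => simp at h
  | succ e ih =>
    rw [wpow_succ]
    by_cases hi : i < x.length
    · rw [List.getD_append _ _ _ _ hi, Nat.mod_eq_of_lt hi]
    · push_neg at hi
      rw [Nat.succ_mul] at h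
      rw [List.getD_append_right _ _ _ _ hi, ih (i - x.length) (by omega)]
      congr 1
      exact (Nat.mod_eq_sub_mod hi).symm

lemma eval_low (x u : List α) (i e : ℕ) (hi : i < e * x.length) :
    infWord (wpow x e ++ u) i = infWord x i := by
  have hA : (wpow x e ++ u).length = e * x.length + u.length := by
    rw [List.length_append, wpow_length]
  show (wpow x e ++ u).getD (i % (wpow x e ++ u).length) default = _
  rw [hA, Nat.mod_eq_of_lt (by omega),
    List.getD_append _ _ _ _ (by rw [wpow_length]; omega), wpow_getD x e i hi]
  rfl

lemma eval_high (x u : List α) (e : ℕ) (he : 1 ≤ e)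
    (nu : ℕ) (hnup : nu < x.length)
    (hagr : ∀ i, i < nu → infWord u i = infWord x i)
    (j : ℕ) (hj : j < u.length + nu) :
    infWord (wpow x e ++ u) (e * x.length + j) = infWord u j := by
  have hple : x.length ≤ e * x.length := Nat.le_mul_of_pos_left _ he
  have hA : (wpow x e ++ u).length = e * x.length + u.length := by
    rw [List.length_append, wpow_length]
  by_cases hcase : j < u.length
  · show (wpow x e ++ u).getD ((e * x.length + j) % (wpow x e ++ u).length) default = _
    rw [hA, Nat.mod_eq_of_lt (by omega),
      List.getD_append_right _ _ _ _ (by rw [wpow_length]; omega), wpow_length,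
      Nat.add_sub_cancel_left, infWord_lt u j hcase]
  · push_neg at hcase
    have hjnu : j - u.length < nu := by omega
    show (wpow x e ++ u).getD ((e * x.length + j) % (wpow x e ++ u).length) default = _
    have hm : (e * x.length + j) % (wpow x e ++ u).length = j - u.length := by
      rw [hA, Nat.mod_eq_sub_mod (by omega),
        show e * x.length + j - (e * x.length + u.length) = j - u.length by omega,
        Nat.mod_eq_of_lt (by omega)]
    rw [hm, List.getD_append _ _ _ _ (by rw [wpow_length]; omega),
      wpow_getD x e _ (by omega)]
    have h1 : x.getD ((j - u.length) % x.length) default = infWord x (j - u.length) := rfl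
    rw [h1, ← hagr (j - u.length) hjnu]
    have h2 : infWord u ((j - u.length) + u.length) = infWord u (j - u.length) :=
      infWord_period u _
    rw [show j - u.length + u.length = j by omega] at h2
    exact h2.symm

/-- Claim 1, second case: for proper non-empty prefixes `u, v` of a Lyndon
word `x` with `u^∞ < v^∞`, one has `(x^e u)^∞ < (x^e v)^∞` for all `e ≥ 1`. -/
theorem claim1_strict {α : Type*} [LinearOrder α] [Inhabited α]
    (x u v : List α) (hx : IsLyndon x)
    (hu : u ≠ []) (hu' : u ≠ x) (hupx : u <+: x)
    (hv : v ≠ []) (hv' : v ≠ x) (hvpx : v <+: x)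
    (hlt : InfLt (infWord u) (infWord v)) :
    ∀ e : ℕ, 1 ≤ e →
      InfLt (infWord (wpow x e ++ u)) (infWord (wpow x e ++ v)) := by
  intro e he
  obtain ⟨nu, hnu1, hnu2, hnu3, hnu4⟩ := factF x u hx hu hu' hupx
  obtain ⟨nv, hnv1, hnv2, hnv3, hnv4⟩ := factF x v hx hv hv' hvpx
  obtain ⟨n, hna, hnl⟩ := hlt
  obtain ⟨hb1, hb2⟩ := key_bounds x u v hu hupx hv hvpx nu nv n
    hnu1 hnu2 hnu3 hnu4 hnv1 hnv2 hnv3 hnv4 hna hnl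
  refine ⟨e * x.length + n, ?_, ?_⟩
  · intro i hi
    by_cases hcase : i < e * x.length
    · rw [eval_low x u i e hcase, eval_low x v i e hcase]
    · push_neg at hcase
      obtain ⟨j, rfl⟩ : ∃ j, i = e * x.length + j := ⟨i - e * x.length, by omega⟩
      have hj : j < n := by omega
      rw [eval_high x u e he nu hnu2 hnu3 j (by omega),
        eval_high x v e he nv hnv2 hnv3 j (by omega)]
      exact hna j hj
  · rw [eval_high x u e he nu hnu2 hnu3 n hb1,
      eval_high x v e he nv hnv2 hnv3 n hb2]
    exact hnl
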